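/- Let V be a free abelian group with a fixed basis and a a basis element. Then Λ*V decomposes as a direct sum of abelian groups Λ*V ≅ Λ̄*V ⊕ (a ∧ Λ*V), where Λ̄*V is the subalgebra generated by the kernel of the augmentation V → ℤ. Consequently, Λ*V is isomorphic to two copies of Λ̄*V (with a degree shift). -/

import Mathlib

open ExteriorAlgebra

section Aux

variable {V : Type*} [AddCommGroup V]

open CliffordAlgebra

/-- left contraction on the exterior algebra -/
noncomputable def stmt11D (aug : V →ₗ[ℤ] ℤ) :
    ExteriorAlgebra ℤ V →ₗ[ℤ] ExteriorAlgebra ℤ V :=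
  contractLeft (Q := (0 : QuadraticForm ℤ V)) aug

theorem stmt11D_ι_mul (aug : V →ₗ[ℤ] ℤ) (v : V) (x : ExteriorAlgebra ℤ V) :
    stmt11D aug (ExteriorAlgebra.ι ℤ v * x)
      = aug v • x - ExteriorAlgebra.ι ℤ v * stmt11D aug x :=
  contractLeft_ι_mul _ _ _

theorem stmt11D_ι (aug : V →ₗ[ℤ] ℤ) (v : V) :
    stmt11D aug (ExteriorAlgebra.ι ℤ v) = algebraMap ℤ _ (aug v) :=
  contractLeft_ι _ _ _

/-- twisted Leibniz rule for contraction -/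
theorem stmt11D_mul (aug : V →ₗ[ℤ] ℤ) (x y : ExteriorAlgebra ℤ V) :
    stmt11D aug (x * y) = stmt11D aug x * y + involute x * stmt11D aug y := by
  induction x using ExteriorAlgebra.induction generalizing y with
  | algebraMap r =>
    simp only [stmt11D, CliffordAlgebra.contractLeft_algebraMap_mul,
      CliffordAlgebra.contractLeft_algebraMap, AlgHom.commutes, zero_mul, zero_add,
      Algebra.smul_def]
  | ι v =>
    rw [stmt11D_ι_mul, stmt11D_ι, involute_ι, Algebra.smul_def, neg_mul, sub_eq_add_neg]
  | mul x z hx hz =>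
    rw [mul_assoc, hx, hz, hx z, map_mul]
    noncomm_ring
  | add x z hx hz =>
    rw [add_mul, map_add, hx, hz, map_add, map_add]
    noncomm_ring

/-- `ι v` commutes with `x` up to involution -/
theorem stmt11_ι_mul_comm (v : V) (x : ExteriorAlgebra ℤ V) :
    ExteriorAlgebra.ι ℤ v * x = involute x * ExteriorAlgebra.ι ℤ v := by
  induction x using ExteriorAlgebra.induction with
  | algebraMap r => rw [AlgHom.commutes, Algebra.commutes]
  | ι w =>
    rw [involute_ι, neg_mul, eq_neg_iff_add_eq_zero, ι_add_mul_swap]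
  | mul x z hx hz =>
    rw [map_mul, ← mul_assoc, hx, mul_assoc, hz, mul_assoc]
  | add x z hx hz => rw [map_add, mul_add, add_mul, hx, hz]

theorem stmt11D_adjoin (aug : V →ₗ[ℤ] ℤ) (x : ExteriorAlgebra ℤ V)
    (hx : x ∈ Algebra.adjoin ℤ
      (⇑(ExteriorAlgebra.ι ℤ (M := V)) '' ↑(LinearMap.ker aug))) :
    stmt11D aug x = 0 := by
  induction hx using Algebra.adjoin_induction with
  | mem x hx =>
    obtain ⟨w, hw, rfl⟩ := hx
    rw [stmt11D_ι, LinearMap.mem_ker.mp hw, map_zero]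
  | algebraMap r => exact contractLeft_algebraMap _ _ _
  | add x y hx hy hx' hy' => rw [map_add, hx', hy', add_zero]
  | mul x y hx hy hx' hy' => rw [stmt11D_mul, hx', hy', zero_mul, mul_zero, add_zero]

end Aux

theorem stmt11 {ι V : Type*} [AddCommGroup V]
    (b : Module.Basis ι ℤ V) (i : ι)
    (aug : V →ₗ[ℤ] ℤ) (haug : ∀ k, aug (b k) = 1) :
    IsCompl
        (Subalgebra.toSubmodule
          (Algebra.adjoin ℤ (⇑(ExteriorAlgebra.ι ℤ (M := V)) '' ↑(LinearMap.ker aug))))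
        (LinearMap.range (LinearMap.mulLeft ℤ (ExteriorAlgebra.ι ℤ (b i)))) ∧
      Nonempty
        (ExteriorAlgebra ℤ V ≃ₗ[ℤ]
          (Subalgebra.toSubmodule
              (Algebra.adjoin ℤ
                (⇑(ExteriorAlgebra.ι ℤ (M := V)) '' ↑(LinearMap.ker aug))) ×
            Subalgebra.toSubmodule
              (Algebra.adjoin ℤ
                (⇑(ExteriorAlgebra.ι ℤ (M := V)) '' ↑(LinearMap.ker aug))))) := by
  set a : ExteriorAlgebra ℤ V := ExteriorAlgebra.ι ℤ (b i) with ha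
  set S1 : Submodule ℤ (ExteriorAlgebra ℤ V) := Subalgebra.toSubmodule
    (Algebra.adjoin ℤ (⇑(ExteriorAlgebra.ι ℤ (M := V)) '' ↑(LinearMap.ker aug))) with hS1
  set S2 : Submodule ℤ (ExteriorAlgebra ℤ V) :=
    LinearMap.range (LinearMap.mulLeft ℤ a) with hS2
  have hmemS2 : ∀ z : ExteriorAlgebra ℤ V, a * z ∈ S2 := fun z => ⟨z, rfl⟩
  have haugi : aug (b i) = 1 := haug i
  -- the key cancellation: D (a * z) = z - a * D z
  have hDa : ∀ z, stmt11D aug (a * z) = z - a * stmt11D aug z := by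
    intro z
    rw [ha, stmt11D_ι_mul, haugi, one_smul]
  have hdisj : Disjoint S1 S2 := by
    rw [Submodule.disjoint_def]
    rintro x hx1 ⟨z, rfl⟩
    have h0 : stmt11D aug (a * z) = 0 := stmt11D_adjoin aug _ hx1
    rw [hDa] at h0
    have hz : z = a * stmt11D aug z := by linear_combination (norm := module) h0
    calc LinearMap.mulLeft ℤ a z = a * z := rfl
      _ = a * (a * stmt11D aug z) := by rw [← hz]
      _ = (a * a) * stmt11D aug z := (mul_assoc _ _ _).symm
      _ = 0 := by rw [ha, ExteriorAlgebra.ι_sq_zero, zero_mul]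
  have hcodisj : Codisjoint S1 S2 := by
    rw [codisjoint_iff_le_sup]
    rintro x -
    induction x using ExteriorAlgebra.induction with
    | algebraMap r =>
      exact Submodule.mem_sup_left (Subalgebra.algebraMap_mem _ r)
    | ι v =>
      have hv : ExteriorAlgebra.ι ℤ v
          = ExteriorAlgebra.ι ℤ (v - aug v • b i) + aug v • (a * 1) := by
        rw [mul_one, map_sub, map_smul, ha]; abel
      rw [hv]
      refine Submodule.add_mem _ (Submodule.mem_sup_left ?_)
        (Submodule.smul_mem _ _ (Submodule.mem_sup_right (hmemS2 1)))
      exact Algebra.subset_adjoin ⟨_, by simp [LinearMap.mem_ker, haugi], rfl⟩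
    | mul x y hx hy =>
      obtain ⟨p, hp, _, ⟨q, rfl⟩, rfl⟩ := Submodule.mem_sup.mp hx
      obtain ⟨p', hp', _, ⟨q', rfl⟩, rfl⟩ := Submodule.mem_sup.mp hy
      have e1 : (p + LinearMap.mulLeft ℤ a q) * (p' + LinearMap.mulLeft ℤ a q')
          = p * p' + (a * (CliffordAlgebra.involute p * q')
            + a * (q * (p' + a * q'))) := by
        have hcomm : p * a = a * CliffordAlgebra.involute p := by
          conv_lhs => rw [← CliffordAlgebra.involute_involute (Q := (0 : QuadraticForm ℤ V)) p]
          rw [← stmt11_ι_mul_comm, ha]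
        simp only [LinearMap.mulLeft_apply]
        rw [mul_add, add_mul, add_mul, mul_add, ← mul_assoc, ← mul_assoc, hcomm]
        noncomm_ring
      rw [e1]
      exact Submodule.add_mem _ (Submodule.mem_sup_left ((Subalgebra.mem_toSubmodule _).mpr (mul_mem ((Subalgebra.mem_toSubmodule _).mp hp) ((Subalgebra.mem_toSubmodule _).mp hp'))))
        (Submodule.add_mem _ (Submodule.mem_sup_right (hmemS2 _))
          (Submodule.mem_sup_right (hmemS2 _)))
    | add x y hx hy => exact Submodule.add_mem _ hx hy
  have hcompl : IsCompl S1 S2 := ⟨hdisj, hcodisj⟩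
  refine ⟨hcompl, ⟨?_⟩⟩
  -- S1 ≃ S2 via multiplication by a
  have hDzero : ∀ p : S1, stmt11D aug (p : ExteriorAlgebra ℤ V) = 0 := fun p =>
    stmt11D_adjoin aug _ p.2
  let f : S1 →ₗ[ℤ] S2 :=
    { toFun := fun p => ⟨a * (p : ExteriorAlgebra ℤ V), hmemS2 _⟩
      map_add' := fun p q => by ext; simp [mul_add]
      map_smul' := fun r p => Subtype.ext (mul_smul_comm r a p) }
  have hfbij : Function.Bijective f := by
    constructor
    · rintro p q hpq
      have h : a * (p : ExteriorAlgebra ℤ V) = a * (q : ExteriorAlgebra ℤ V) :=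
        congrArg Subtype.val hpq
      have := congrArg (stmt11D aug) h
      rw [hDa, hDa, hDzero, hDzero, mul_zero, sub_zero, sub_zero] at this
      exact Subtype.ext this
    · rintro ⟨x, z, rfl⟩
      have hz : (z : ExteriorAlgebra ℤ V) ∈ S1 ⊔ S2 := hcodisj.eq_top ▸ Submodule.mem_top
      obtain ⟨p, hp, _, ⟨q, rfl⟩, hzeq⟩ := Submodule.mem_sup.mp hz
      refine ⟨⟨p, hp⟩, ?_⟩
      ext
      show a * p = LinearMap.mulLeft ℤ a z
      simp only [LinearMap.mulLeft_apply] at hzeq ⊢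
      rw [← hzeq, mul_add, ← mul_assoc, ha, ExteriorAlgebra.ι_sq_zero, zero_mul, add_zero]
  exact ((Submodule.prodEquivOfIsCompl S1 S2 hcompl).symm.trans
    ((LinearEquiv.refl ℤ S1).prodCongr (LinearEquiv.ofBijective f hfbij).symm))
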